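/- arXiv:math/0212328 — 2 statements merged into one kernel-verified Lean document; each statement's English description precedes it below -/
import Mathlib

section
/- Knuth's bijection Φ from 321-avoiding permutations in S_n to Dyck paths satisfies ℓ(σ) = (n + he(Φ(σ)))/2, where ℓ(σ) is the length of the longest increasing subsequence of σ and he(D) is the height of D at x = n. -/
/-- `σ` avoids the pattern 321, i.e. there is no decreasing subsequence of length 3. -/
def Avoids321 {n : ℕ} (σ : Equiv.Perm (Fin n)) : Prop :=
  ¬ ∃ i j k : Fin n, i < j ∧ j < k ∧ σ k < σ j ∧ σ j < σ i

/-- `σ` avoids the pattern 132. -/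
def Avoids132 {n : ℕ} (σ : Equiv.Perm (Fin n)) : Prop :=
  ¬ ∃ i j k : Fin n, i < j ∧ j < k ∧ σ i < σ k ∧ σ k < σ j

/-- The number of fixed points of `σ`. -/
def fp {n : ℕ} (σ : Equiv.Perm (Fin n)) : ℕ :=
  (Finset.univ.filter fun i => σ i = i).card

/-- The number of excedances of `σ`. -/
def exc {n : ℕ} (σ : Equiv.Perm (Fin n)) : ℕ :=
  (Finset.univ.filter fun i => i < σ i).card

/-- The length of the longest increasing subsequence of `σ`. -/
noncomputable def lis {n : ℕ} (σ : Equiv.Perm (Fin n)) : ℕ :=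
  sSup {k | ∃ f : Fin k → Fin n, StrictMono f ∧ StrictMono (σ ∘ f)}

/-- The rank of `σ` : the largest `k` such that (in one-line, 0-indexed notation)
`σ i ≥ k` for all `i < k`. -/
noncomputable def rk {n : ℕ} (σ : Equiv.Perm (Fin n)) : ℕ :=
  sSup {k | ∀ i : Fin n, (i : ℕ) < k → k ≤ (σ i : ℕ)}

/-- A Dyck word, encoded as a list of booleans (`true` = up-step, `false` = down-step). -/
def IsDyckWord (w : List Bool) : Prop :=
  w.count true = w.count false ∧ ∀ p : List Bool, p <+: w → p.count false ≤ p.count true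

/-- `(A, B, C)` is a tunnel decomposition of `w`, i.e. `w = A u B d C` with `B` a Dyck word. -/
def IsTunnel (w A B C : List Bool) : Prop :=
  w = A ++ true :: (B ++ false :: C) ∧ IsDyckWord B

/-- The number of tunnels of `w`. -/
noncomputable def numTunnels (w : List Bool) : ℕ :=
  Nat.card {T : List Bool × List Bool × List Bool // IsTunnel w T.1 T.2.1 T.2.2}

/-- The number of centered tunnels of `w` (`|A| = |C|`). -/
noncomputable def ct (w : List Bool) : ℕ :=
  Nat.card {T : List Bool × List Bool × List Bool //
    IsTunnel w T.1 T.2.1 T.2.2 ∧ T.1.length = T.2.2.length}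

/-- The number of right tunnels of `w` (`|A| > |C|`). -/
noncomputable def rt (w : List Bool) : ℕ :=
  Nat.card {T : List Bool × List Bool × List Bool //
    IsTunnel w T.1 T.2.1 T.2.2 ∧ T.2.2.length < T.1.length}

/-- The number of left tunnels of `w` (`|A| < |C|`). -/
noncomputable def lt (w : List Bool) : ℕ :=
  Nat.card {T : List Bool × List Bool × List Bool //
    IsTunnel w T.1 T.2.1 T.2.2 ∧ T.1.length < T.2.2.length}

/-- The height of the path `w` at its midpoint. -/
def heInt (w : List Bool) : ℤ :=
  ((w.take (w.length / 2)).count true : ℤ) - ((w.take (w.length / 2)).count false : ℤ)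

/-- The value `σ i` as a natural number, extended by `n` outside the domain. -/
def valAt {n : ℕ} (σ : Equiv.Perm (Fin n)) (i : ℕ) : ℕ :=
  if h : i < n then (σ ⟨i, h⟩ : ℕ) else n

/-- `min (σ 0, …, σ (r-1))`, with the convention `minUpTo σ 0 = n`. -/
def minUpTo {n : ℕ} (σ : Equiv.Perm (Fin n)) (r : ℕ) : ℕ :=
  (List.range r).foldr (fun i m => min (valAt σ i) m) n

/-- Krattenthaler's bijection `Ψ` from 132-avoiding permutations to Dyck words:
the Dyck path tracing the border of the diagram of `σ`, read from the lower-left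
corner (bottom row) to the upper-right corner: going up through row `r` contributes
an up-step, and the right-steps between consecutive rows are governed by the border
of the diagram, whose row `r` has length `minUpTo σ (r+1)`. -/
def psi {n : ℕ} (σ : Equiv.Perm (Fin n)) : List Bool :=
  (List.range n).flatMap fun k =>
    true :: List.replicate (minUpTo σ (n - 1 - k) - minUpTo σ (n - k)) false

/-- RSK row insertion of `x` into an increasing row: returns the new row and the
bumped entry (if any); `x` bumps the leftmost entry larger than it. -/
def insert1 : List ℕ → ℕ → List ℕ × Option ℕ
  | [], x => ([x], none)
  | y :: ys, x =>
    if x < y then (x :: ys, some y)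
    else
      let p := insert1 ys x
      (y :: p.1, p.2)

/-- One step of RSK for permutations with at most two rows: insert `x` into the
first row; a bumped entry is appended to the second row. -/
def rskStep (s : List ℕ × List ℕ) (x : ℕ) : List ℕ × List ℕ :=
  let p := insert1 s.1 x
  match p.2 with
  | none => (p.1, s.2)
  | some y => (p.1, s.2 ++ [y])

/-- The two rows of the RSK insertion tableau `P` after inserting `σ 0, …, σ (m-1)`. -/
def rskRows {n : ℕ} (σ : Equiv.Perm (Fin n)) (m : ℕ) : List ℕ × List ℕ :=
  (((List.range m).map (valAt σ)).foldl rskStep ([], []))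

/-- The entry bumped (if any) when `σ i` is inserted during RSK. -/
def bumpAt {n : ℕ} (σ : Equiv.Perm (Fin n)) (i : ℕ) : Option ℕ :=
  (insert1 (rskRows σ i).1 (valAt σ i)).2

/-- Knuth's bijection `Φ` from 321-avoiding permutations to Dyck words: the first
half records, for each value `v`, whether `v` lies in the first row of the insertion
tableau `P`; the second half is the word similarly obtained from the recording tableau
`Q` (position `i` is in the first row of `Q` iff no bumping occurs at step `i`),
written backwards. -/
def phi {n : ℕ} (σ : Equiv.Perm (Fin n)) : List Bool :=
  ((List.range n).map fun v => decide (v ∈ (rskRows σ n).1)) ++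
    ((List.range n).map fun i => decide (¬ bumpAt σ i = none)).reverse

def rowIns (r : List ℕ) (x : ℕ) : List ℕ := (insert1 r x).1
def rowL (M : List ℕ) : List ℕ := M.foldl rowIns []

lemma insert1_cases (r : List ℕ) (x : ℕ) :
    ((∀ y ∈ r, y ≤ x) ∧ insert1 r x = (r ++ [x], none)) ∨
    (∃ a y b, r = a ++ y :: b ∧ (∀ z ∈ a, z ≤ x) ∧ x < y ∧
      insert1 r x = (a ++ x :: b, some y)) := by
  induction r with
  | nil => left; simp [insert1]
  | cons y ys ih =>
    by_cases h : x < y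
    · right; exact ⟨[], y, ys, rfl, by simp, h, by simp [insert1, h]⟩
    · rcases ih with ⟨h1, h2⟩ | ⟨a, z, b, he, ha, hz, h2⟩
      · left
        refine ⟨?_, ?_⟩
        · intro w hw
          rcases List.mem_cons.mp hw with rfl | hw
          · exact le_of_not_gt h
          · exact h1 w hw
        · simp [insert1, h, h2]
      · right
        refine ⟨y :: a, z, b, by rw [he]; rfl, ?_, hz, by simp [insert1, h, h2]⟩
        intro w hw
        rcases List.mem_cons.mp hw with rfl | hw
        · exact le_of_not_gt h
        · exact ha w hw

lemma rowL_concat (M : List ℕ) (x : ℕ) : rowL (M ++ [x]) = rowIns (rowL M) x := by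
  simp [rowL]

lemma rowIns_subset {r : List ℕ} {x : ℕ} {y : ℕ} (h : y ∈ rowIns r x) : y ∈ x :: r := by
  rcases insert1_cases r x with ⟨_, h2⟩ | ⟨a, z, b, he, _, _, h2⟩
  · unfold rowIns at h; rw [h2] at h; simp at h
    rcases h with h | h
    · exact List.mem_cons_of_mem _ h
    · simp [h]
  · unfold rowIns at h; rw [h2] at h; simp at h
    rcases h with h | h | h
    · exact List.mem_cons_of_mem _ (by rw [he]; simp [h])
    · simp [h]
    · exact List.mem_cons_of_mem _ (by rw [he]; simp [h])

lemma rowL_subset : ∀ (M : List ℕ), ∀ y ∈ rowL M, y ∈ M := by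
  intro M
  induction M using List.reverseRecOn with
  | nil => simp [rowL]
  | append_singleton M x ih =>
    intro y hy
    rw [rowL_concat] at hy
    rcases List.mem_cons.mp (rowIns_subset hy) with rfl | h
    · simp
    · exact List.mem_append_left _ (ih y h)

lemma rowIns_sorted {r : List ℕ} {x : ℕ} (h : r.Chain' (· ≤ ·)) :
    (rowIns r x).Chain' (· ≤ ·) := by
  rcases insert1_cases r x with ⟨h1, h2⟩ | ⟨a, y, b, he, ha, hxy, h2⟩
  · unfold rowIns; rw [h2]
    unfold List.Chain'; rw [List.isChain_append]
    refine ⟨h, List.isChain_singleton x, ?_⟩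
    intro u hu v hv
    simp at hv; subst hv
    exact h1 u (List.mem_of_mem_getLast? hu)
  · unfold rowIns; rw [h2]
    subst he
    unfold List.Chain' at h ⊢; rw [List.isChain_append] at h ⊢
    obtain ⟨hca, hcyb, hj⟩ := h
    refine ⟨hca, ?_, ?_⟩
    · rw [List.isChain_cons] at hcyb ⊢
      refine ⟨fun v hv => ?_, hcyb.2⟩
      exact le_trans (le_of_lt hxy) (hcyb.1 v hv)
    · intro u hu v hv
      simp at hv; subst hv
      exact ha u (List.mem_of_mem_getLast? hu)

lemma rowL_sorted (M : List ℕ) : (rowL M).Chain' (· ≤ ·) := by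
  induction M using List.reverseRecOn with
  | nil => simp [rowL]; exact List.isChain_nil
  | append_singleton M x ih => rw [rowL_concat]; exact rowIns_sorted ih

lemma rowIns_nodup {r : List ℕ} {x : ℕ} (hx : x ∉ r) (h : r.Nodup) :
    (rowIns r x).Nodup := by
  rcases insert1_cases r x with ⟨h1, h2⟩ | ⟨a, y, b, he, ha, hxy, h2⟩
  · unfold rowIns; rw [h2]
    simp [List.nodup_append, h, hx]; exact fun a ha hax => hx (by subst hax; exact ha)
  · unfold rowIns; rw [h2]
    subst he
    rw [List.nodup_middle] at h ⊢
    rw [List.nodup_cons] at h ⊢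
    refine ⟨fun hc => hx ?_, h.2⟩
    rcases List.mem_append.mp hc with hc | hc
    · simp [hc]
    · simp [hc]

lemma rowL_nodup {M : List ℕ} (h : M.Nodup) : (rowL M).Nodup := by
  induction M using List.reverseRecOn with
  | nil => simp [rowL]
  | append_singleton M x ih =>
    rw [rowL_concat]
    rw [List.nodup_append] at h
    refine rowIns_nodup (fun hc => ?_) (ih h.1)
    exact h.2.2 x (rowL_subset M x hc) x (by simp) rfl

lemma rowIns_length {r : List ℕ} (x : ℕ) : r.length ≤ (rowIns r x).length := by
  rcases insert1_cases r x with ⟨_, h2⟩ | ⟨a, y, b, he, _, _, h2⟩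
  · unfold rowIns; rw [h2]; simp
  · unfold rowIns; rw [h2]; subst he; simp

lemma rowIns_le {r : List ℕ} {x : ℕ} {j : ℕ} {u : ℕ} (h : r[j]? = some u) :
    ∃ w, (rowIns r x)[j]? = some w ∧ w ≤ u := by
  have hj : j < r.length := by
    by_contra hc
    rw [List.getElem?_eq_none (le_of_not_gt hc)] at h; simp at h
  rcases insert1_cases r x with ⟨_, h2⟩ | ⟨a, y, b, he, ha, hxy, h2⟩
  · unfold rowIns; rw [h2]
    exact ⟨u, by rw [List.getElem?_append_left hj]; exact h, le_refl u⟩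
  · unfold rowIns; rw [h2]; subst he
    rcases lt_trichotomy j a.length with hja | hja | hja
    · refine ⟨u, ?_, le_refl u⟩
      rw [List.getElem?_append_left hja] at h ⊢; exact h
    · subst hja
      rw [List.getElem?_append_right (le_refl _)] at h ⊢
      simp at h ⊢
      exact le_of_lt (h ▸ hxy)
    · refine ⟨u, ?_, le_refl u⟩
      rw [List.getElem?_append_right (le_of_lt hja)] at h ⊢
      rw [List.getElem?_cons, if_neg (by omega)] at h ⊢
      exact h

lemma extend_one {M s : List ℕ} {v x j : ℕ} (hs : List.Sublist s M) (hc : s.Chain' (· < ·))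
    (hl : s.length = j) (hlast : s.getLast? = some v) (hvx : v < x) :
    List.Sublist (s ++ [x]) (M ++ [x]) ∧ (s ++ [x]).Chain' (· < ·) ∧ (s ++ [x]).length = j + 1 ∧
      (s ++ [x]).getLast? = some x := by
  refine ⟨hs.append (List.Sublist.refl [x]), ?_, by simp [hl], List.getLast?_concat⟩
  unfold List.Chain'; rw [List.isChain_append]
  refine ⟨hc, List.isChain_singleton x, ?_⟩
  intro a ha b hb
  simp at hb; subst hb
  rw [hlast] at ha
  simp at ha; subst ha
  exact hvx

lemma single_one (M : List ℕ) (x : ℕ) :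
    List.Sublist [x] (M ++ [x]) ∧ ([x] : List ℕ).Chain' (· < ·) ∧ ([x] : List ℕ).length = 1 ∧
      ([x] : List ℕ).getLast? = some x :=
  ⟨(List.nil_sublist M).append (List.Sublist.refl [x]), List.isChain_singleton x, rfl, rfl⟩

lemma partA (M : List ℕ) (hnd : M.Nodup) : ∀ j u, (rowL M)[j]? = some u →
    ∃ s : List ℕ, List.Sublist s M ∧ s.Chain' (· < ·) ∧ s.length = j + 1 ∧ s.getLast? = some u := by
  induction M using List.reverseRecOn with
  | nil => intro j u h; simp [rowL] at h
  | append_singleton M x ih =>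
    have hnd' : M.Nodup ∧ x ∉ M := by
      rw [List.nodup_append] at hnd
      exact ⟨hnd.1, fun hc => hnd.2.2 x hc x (by simp) rfl⟩
    intro j u h
    rw [rowL_concat] at h
    set r := rowL M with hr
    have hmem : ∀ v ∈ r, v ∈ M := rowL_subset M
    rcases insert1_cases r x with ⟨h1, h2⟩ | ⟨a, y, b, he, ha, hxy, h2⟩
    · unfold rowIns at h; rw [h2] at h
      rcases lt_trichotomy j r.length with hj | hj | hj
      · rw [List.getElem?_append_left hj] at h
        obtain ⟨s, hs1, hs2, hs3, hs4⟩ := ih hnd'.1 j u h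
        exact ⟨s, hs1.trans (List.sublist_append_left M [x]), hs2, hs3, hs4⟩
      · subst hj
        rw [List.getElem?_append_right (le_refl _)] at h
        simp at h
        subst h
        rcases Nat.eq_zero_or_pos r.length with h0 | h0
        · rw [h0]
          exact ⟨[x], (single_one M x).1, (single_one M x).2.1, (single_one M x).2.2.1,
            (single_one M x).2.2.2⟩
        · have hlt : r.length - 1 < r.length := by omega
          have hv : r[r.length - 1]? = some r[r.length - 1] := List.getElem?_eq_getElem hlt
          obtain ⟨s, hs1, hs2, hs3, hs4⟩ := ih hnd'.1 (r.length - 1) _ hv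
          have hvr : r[r.length - 1] ∈ r := List.mem_of_getElem? hv
          have hvx : r[r.length - 1] < x :=
            lt_of_le_of_ne (h1 _ hvr) (fun hq => hnd'.2 (hq ▸ hmem _ hvr))
          obtain ⟨e1, e2, e3, e4⟩ := extend_one hs1 hs2 hs3 hs4 hvx
          exact ⟨s ++ [x], e1, e2, by rw [e3]; omega, e4⟩
      · exfalso
        rw [List.getElem?_eq_none (by simp; omega)] at h
        simp at h
    · unfold rowIns at h; rw [h2] at h
      rcases lt_trichotomy j a.length with hj | hj | hj
      · have hrj : r[j]? = some u := by
          rw [he, List.getElem?_append_left hj]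
          rw [List.getElem?_append_left hj] at h
          exact h
        obtain ⟨s, hs1, hs2, hs3, hs4⟩ := ih hnd'.1 j u hrj
        exact ⟨s, hs1.trans (List.sublist_append_left M [x]), hs2, hs3, hs4⟩
      · subst hj
        rw [List.getElem?_append_right (le_refl _)] at h
        simp at h
        subst h
        rcases Nat.eq_zero_or_pos a.length with h0 | h0
        · rw [h0]
          exact ⟨[x], (single_one M x).1, (single_one M x).2.1, (single_one M x).2.2.1,
            (single_one M x).2.2.2⟩
        · have hlt : a.length - 1 < a.length := by omega
          have hv : a[a.length - 1]? = some a[a.length - 1] := List.getElem?_eq_getElem hlt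
          have hrv : r[a.length - 1]? = some a[a.length - 1] := by
            rw [he, List.getElem?_append_left hlt]; exact hv
          obtain ⟨s, hs1, hs2, hs3, hs4⟩ := ih hnd'.1 (a.length - 1) _ hrv
          have hva : a[a.length - 1] ∈ a := List.mem_of_getElem? hv
          have hvr : a[a.length - 1] ∈ r := by rw [he]; exact List.mem_append_left _ hva
          have hvx : a[a.length - 1] < x :=
            lt_of_le_of_ne (ha _ hva) (fun hq => hnd'.2 (hq ▸ hmem _ hvr))
          obtain ⟨e1, e2, e3, e4⟩ := extend_one hs1 hs2 hs3 hs4 hvx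
          exact ⟨s ++ [x], e1, e2, by rw [e3]; omega, e4⟩
      · have hrj : r[j]? = some u := by
          rw [he, List.getElem?_append_right (le_of_lt hj), List.getElem?_cons,
            if_neg (by omega)]
          rw [List.getElem?_append_right (le_of_lt hj), List.getElem?_cons,
            if_neg (by omega)] at h
          exact h
        obtain ⟨s, hs1, hs2, hs3, hs4⟩ := ih hnd'.1 j u hrj
        exact ⟨s, hs1.trans (List.sublist_append_left M [x]), hs2, hs3, hs4⟩

lemma partB (M : List ℕ) : ∀ s : List ℕ, List.Sublist s M → s.Chain' (· < ·) →
    s.length ≤ (rowL M).length ∧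
    ∀ v, s.getLast? = some v → ∃ u, (rowL M)[s.length - 1]? = some u ∧ u ≤ v := by
  induction M using List.reverseRecOn with
  | nil =>
    intro s hs _
    rw [List.sublist_nil.mp hs]
    exact ⟨le_refl 0, fun v hv => by simp at hv⟩
  | append_singleton M x ih =>
    intro s hs hc
    rw [rowL_concat]
    set r := rowL M with hrdef
    have hsort : r.Chain' (· ≤ ·) := rowL_sorted M
    obtain ⟨t, l₂, rfl, ht, hl₂⟩ := List.sublist_append_iff.mp hs
    rcases List.sublist_singleton.mp hl₂ with rfl | rfl
    · -- s = t, already a sublist of M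
      rw [List.append_nil]
      rw [List.append_nil] at hc
      obtain ⟨hlen, hlast⟩ := ih t ht hc
      refine ⟨le_trans hlen (rowIns_length x), fun v hv => ?_⟩
      obtain ⟨u, hu, huv⟩ := hlast v hv
      obtain ⟨w, hw, hwu⟩ := rowIns_le (x := x) hu
      exact ⟨w, hw, le_trans hwu huv⟩
    · -- s = t ++ [x]
      unfold List.Chain' at hc; rw [List.isChain_append] at hc
      obtain ⟨hct, -, hjun⟩ := hc
      have hslen : (t ++ [x]).length - 1 = t.length := by simp
      have hslast : (t ++ [x]).getLast? = some x := List.getLast?_concat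
      rw [hslen, hslast]
      have key : t.length + 1 ≤ (rowIns r x).length ∧
          ∃ u, (rowIns r x)[t.length]? = some u ∧ u ≤ x := by
        rcases Nat.eq_zero_or_pos t.length with h0 | h0
        · -- t = []
          rw [h0]
          rcases insert1_cases r x with ⟨h1, h2⟩ | ⟨a, y, b, he, ha, hxy, h2⟩
          · unfold rowIns; rw [h2]
            refine ⟨by simp, ?_⟩
            rcases Nat.eq_zero_or_pos r.length with hr0 | hr0
            · rw [List.length_eq_zero_iff.mp hr0]
              exact ⟨x, by simp, le_refl x⟩
            · refine ⟨r[0], ?_, h1 _ (r.getElem_mem hr0)⟩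
              rw [List.getElem?_append_left hr0]
              exact List.getElem?_eq_getElem hr0
          · unfold rowIns; rw [h2]
            refine ⟨by simp; omega, ?_⟩
            rcases Nat.eq_zero_or_pos a.length with ha0 | ha0
            · rw [List.length_eq_zero_iff.mp ha0]
              exact ⟨x, by simp, le_refl x⟩
            · refine ⟨a[0], ?_, ha _ (a.getElem_mem ha0)⟩
              rw [List.getElem?_append_left ha0]
              exact List.getElem?_eq_getElem ha0
        · -- t ≠ []
          have htne : t ≠ [] := by intro hq; rw [hq] at h0; simp at h0
          obtain ⟨v₀, hv₀⟩ := Option.isSome_iff_exists.mp (List.getLast?_isSome.mpr htne)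
          have hv₀x : v₀ < x := by
            have := hjun v₀ hv₀ x (by simp)
            exact this
          obtain ⟨hlen, hlast⟩ := ih t ht hct
          obtain ⟨u, hu, huv⟩ := hlast v₀ hv₀
          have hux : u < x := lt_of_le_of_lt huv hv₀x
          rcases insert1_cases r x with ⟨h1, h2⟩ | ⟨a, y, b, he, ha, hxy, h2⟩
          · unfold rowIns; rw [h2]
            refine ⟨by simp; omega, ?_⟩
            rcases lt_or_eq_of_le hlen with hlt | heq
            · refine ⟨r[t.length], ?_, h1 _ (r.getElem_mem hlt)⟩
              rw [List.getElem?_append_left hlt]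
              exact List.getElem?_eq_getElem hlt
            · refine ⟨x, ?_, le_refl x⟩
              rw [heq, List.getElem?_append_right (le_refl _)]
              simp
          · -- bump case: r = a ++ y :: b
            have hta : t.length - 1 < a.length := by
              by_contra hcon
              push_neg at hcon
              have hu' : (y :: b)[t.length - 1 - a.length]? = some u := by
                rw [he, List.getElem?_append_right hcon] at hu
                exact hu
              have humem : u ∈ y :: b := List.mem_of_getElem? hu'
              have hyu : y ≤ u := by
                have hp : r.Pairwise (· ≤ ·) := List.isChain_iff_pairwise.mp hsort
                rw [he] at hp
                have hyb := (List.pairwise_append.mp hp).2.1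
                rcases List.mem_cons.mp humem with rfl | hub
                · exact le_refl u
                · exact (List.pairwise_cons.mp hyb).1 u hub
              omega
            have htla : t.length ≤ a.length := by omega
            unfold rowIns; rw [h2]
            refine ⟨by simp; omega, ?_⟩
            rcases lt_or_eq_of_le htla with hlt | heq
            · refine ⟨a[t.length], ?_, ha _ (a.getElem_mem hlt)⟩
              rw [List.getElem?_append_left hlt]
              exact List.getElem?_eq_getElem hlt
            · refine ⟨x, ?_, le_refl x⟩
              rw [heq, List.getElem?_append_right (le_refl _)]
              simp
      refine ⟨by simpa using key.1, fun v hv => ?_⟩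
      obtain ⟨u, hu, hux⟩ := key.2
      have : v = x := by rw [← Option.some_inj]; exact hv.symm
      exact ⟨u, hu, by omega⟩


lemma schensted {M : List ℕ} (hnd : M.Nodup) :
    IsGreatest {k | ∃ s, List.Sublist s M ∧ s.Chain' (· < ·) ∧ s.length = k}
      (rowL M).length := by
  constructor
  · rcases Nat.eq_zero_or_pos (rowL M).length with h0 | h0
    · exact ⟨[], List.nil_sublist M, List.isChain_nil, by simp [h0]⟩
    · have hlt : (rowL M).length - 1 < (rowL M).length := by omega
      obtain ⟨s, hs1, hs2, hs3, _⟩ := partA M hnd _ _ (List.getElem?_eq_getElem hlt)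
      exact ⟨s, hs1, hs2, by rw [hs3]; omega⟩
  · rintro k ⟨s, hs1, hs2, rfl⟩
    exact (partB M s hs1 hs2).1

lemma valList_length {n : ℕ} (σ : Equiv.Perm (Fin n)) :
    ((List.range n).map (valAt σ)).length = n := by simp

lemma valList_get {n : ℕ} (σ : Equiv.Perm (Fin n))
    (i : Fin (((List.range n).map (valAt σ)).length)) :
    ((List.range n).map (valAt σ)).get i = (σ (Fin.cast (valList_length σ) i) : ℕ) := by
  have hi : (i : ℕ) < n := by have := i.isLt; simpa using this
  simp [List.get_eq_getElem, valAt, hi]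
  rfl

lemma valList_nodup {n : ℕ} (σ : Equiv.Perm (Fin n)) :
    ((List.range n).map (valAt σ)).Nodup := by
  refine List.Nodup.map_on ?_ (List.nodup_range)
  intro i hi j hj hij
  rw [List.mem_range] at hi hj
  simp only [valAt, dif_pos hi, dif_pos hj] at hij
  exact congrArg Fin.val (σ.injective (Fin.ext hij))

lemma lis_eq_row {n : ℕ} (σ : Equiv.Perm (Fin n)) :
    lis σ = (rowL ((List.range n).map (valAt σ))).length := by
  set L := (List.range n).map (valAt σ) with hLdef
  have hL : L.length = n := valList_length σ
  have hset : {k | ∃ f : Fin k → Fin n, StrictMono f ∧ StrictMono (σ ∘ f)} =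
      {k | ∃ s, List.Sublist s L ∧ s.Chain' (· < ·) ∧ s.length = k} := by
    ext k
    simp only [Set.mem_setOf_eq]
    constructor
    · rintro ⟨f, hf, hsf⟩
      have hlen : (List.ofFn (fun i : Fin k => (σ (f i) : ℕ))).length = k :=
        List.length_ofFn
      refine ⟨List.ofFn (fun i : Fin k => (σ (f i) : ℕ)), ?_, ?_, hlen⟩
      · rw [List.sublist_iff_exists_fin_orderEmbedding_get_eq]
        refine ⟨OrderEmbedding.ofStrictMono
          (fun i => Fin.cast hL.symm (f (Fin.cast hlen i))) ?_, ?_⟩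
        · intro i j hij
          rw [Fin.lt_def]
          simp only [Fin.coe_cast]
          have h1 : (Fin.cast hlen i) < Fin.cast hlen j := by
            rw [Fin.lt_def]; exact hij
          exact hf h1
        · intro i
          rw [List.get_ofFn, valList_get]
          rfl
      · unfold List.Chain'; rw [List.isChain_iff_pairwise, List.pairwise_iff_get]
        intro i j hij
        rw [List.get_ofFn, List.get_ofFn]
        have h1 : (Fin.cast hlen i) < Fin.cast hlen j := by
          rw [Fin.lt_def]; exact hij
        exact hsf h1
    · rintro ⟨s, hs, hchain, rfl⟩
      obtain ⟨e, he⟩ := List.sublist_iff_exists_fin_orderEmbedding_get_eq.mp hs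
      refine ⟨fun i => Fin.cast hL (e i), ?_, ?_⟩
      · intro i j hij
        rw [Fin.lt_def]
        simp only [Fin.coe_cast]
        exact e.strictMono hij
      · intro i j hij
        have hval : ∀ m : Fin s.length, (σ (Fin.cast hL (e m)) : ℕ) = s.get m := by
          intro m
          rw [he m, valList_get]
        rw [Fin.lt_def]
        show (σ (Fin.cast hL (e i)) : ℕ) < (σ (Fin.cast hL (e j)) : ℕ)
        rw [hval i, hval j]
        exact List.pairwise_iff_get.mp (List.isChain_iff_pairwise.mp hchain) i j hij
  rw [lis, hset]
  exact (schensted (valList_nodup σ)).csSup_eq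

lemma rskStep_fst (s : List ℕ × List ℕ) (x : ℕ) : (rskStep s x).1 = rowIns s.1 x := by
  unfold rskStep rowIns
  cases h : (insert1 s.1 x).2 <;> simp [h]

lemma foldl_rskStep_fst : ∀ (M : List ℕ) (s : List ℕ × List ℕ),
    (M.foldl rskStep s).1 = M.foldl rowIns s.1 := by
  intro M
  induction M with
  | nil => intro s; rfl
  | cons x M ih => intro s; rw [List.foldl_cons, List.foldl_cons, ih, rskStep_fst]

lemma rskRows_fst {n : ℕ} (σ : Equiv.Perm (Fin n)) :
    (rskRows σ n).1 = rowL ((List.range n).map (valAt σ)) := by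
  rw [rskRows, foldl_rskStep_fst, rowL]

lemma valList_lt {n : ℕ} (σ : Equiv.Perm (Fin n)) :
    ∀ y ∈ (List.range n).map (valAt σ), y < n := by
  intro y hy
  rw [List.mem_map] at hy
  obtain ⟨i, hi, rfl⟩ := hy
  rw [List.mem_range] at hi
  simp [valAt, hi]

lemma bool_count (l : List Bool) : l.count true + l.count false = l.length := by
  induction l with
  | nil => simp
  | cons b l ih => cases b <;> simp [List.count_cons] <;> omega


/-- For Knuth's bijection `Φ`, the length of the longest increasing subsequence of
`σ` is `(n + he(Φ σ)) / 2`, where `he` is the height of the Dyck path at its midpoint. -/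
theorem stmt13 (n : ℕ) (σ : Equiv.Perm (Fin n)) (h : Avoids321 σ) :
    2 * (lis σ : ℤ) = (n : ℤ) + heInt (phi σ) := by
  set L := (List.range n).map (valAt σ) with hLdef
  set R := rowL L with hRdef
  set A := (List.range n).map (fun v => decide (v ∈ (rskRows σ n).1)) with hAdef
  have hRL : (rskRows σ n).1 = R := rskRows_fst σ
  have hAlen : A.length = n := by simp [hAdef]
  have hphi : phi σ = A ++ ((List.range n).map fun i => decide (¬ bumpAt σ i = none)).reverse :=
    rfl
  have hlen : (phi σ).length = n + n := by simp [hphi, hAlen]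
  have htake : (phi σ).take ((phi σ).length / 2) = A := by
    rw [hlen, hphi]
    have : (n + n) / 2 = n := by omega
    rw [this, List.take_left' hAlen]
  -- count true A = R.length
  have hperm : List.Perm ((List.range n).filter fun v => decide (v ∈ R)) R := by
    rw [List.perm_ext_iff_of_nodup (List.Nodup.filter _ (List.nodup_range))
      (rowL_nodup (valList_nodup σ))]
    intro a
    simp only [List.mem_filter, List.mem_range, decide_eq_true_eq]
    constructor
    · exact fun h => h.2
    · intro h
      exact ⟨valList_lt σ a (rowL_subset L a h), h⟩
  have hct : A.count true = R.length := by
    rw [hAdef, List.count_eq_countP, List.countP_map]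
    have : ((fun b => b == true) ∘ fun v => decide (v ∈ (rskRows σ n).1)) =
        fun v => decide (v ∈ R) := by
      funext v; simp [hRL]
    rw [this, List.countP_eq_length_filter, hperm.length_eq]
  have hcf : A.count true + A.count false = n := by rw [bool_count, hAlen]
  have hlis : lis σ = R.length := lis_eq_row σ
  have hhe : heInt (phi σ) = (R.length : ℤ) - (A.count false : ℤ) := by
    rw [heInt, htake, hct]
  rw [hhe, hlis]
  have : (R.length : ℤ) + (A.count false : ℤ) = n := by
    rw [← hct]; exact_mod_cast congrArg (Nat.cast : ℕ → ℤ) hcf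
  linarith
end

section
/- If Ψ denotes Krattenthaler's bijection from 132-avoiding permutations to Dyck paths, then Ψ(σ^{-1}) is the reflection of Ψ(σ) across the vertical line x = n; consequently σ is an involution if and only if Ψ(σ) is symmetric under this reflection. -/
/-! ### Basic lemmas about `minUpTo` -/

lemma foldr_min_init {n : ℕ} (g : ℕ → ℕ) (a : ℕ) (l : List ℕ) :
    l.foldr (fun i m => min (g i) m) (min a n) = min a (l.foldr (fun i m => min (g i) m) n) := by
  induction l with
  | nil => rfl
  | cons x t ih => simp only [List.foldr_cons, ih]; omega

lemma minUpTo_zero {n : ℕ} (σ : Equiv.Perm (Fin n)) : minUpTo σ 0 = n := rfl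

lemma minUpTo_succ {n : ℕ} (σ : Equiv.Perm (Fin n)) (r : ℕ) :
    minUpTo σ (r + 1) = min (valAt σ r) (minUpTo σ r) := by
  unfold minUpTo
  rw [List.range_succ, List.foldr_append]
  simpa using foldr_min_init (valAt σ) (valAt σ r) (List.range r)

lemma minUpTo_le_n {n : ℕ} (σ : Equiv.Perm (Fin n)) (r : ℕ) : minUpTo σ r ≤ n := by
  induction r with
  | zero => simp [minUpTo_zero]
  | succ r ih => rw [minUpTo_succ]; omega

lemma minUpTo_anti {n : ℕ} (σ : Equiv.Perm (Fin n)) {r s : ℕ} (h : r ≤ s) :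
    minUpTo σ s ≤ minUpTo σ r := by
  induction s with
  | zero => simp_all [minUpTo_zero, minUpTo_le_n]
  | succ s ih =>
    rcases Nat.lt_or_ge r (s+1) with h' | h'
    · have := ih (by omega); rw [minUpTo_succ]; omega
    · have : r = s + 1 := by omega
      subst this; rfl

lemma minUpTo_le {n : ℕ} (σ : Equiv.Perm (Fin n)) {i r : ℕ} (h : i < r) :
    minUpTo σ r ≤ valAt σ i := by
  have h1 : minUpTo σ r ≤ minUpTo σ (i+1) := minUpTo_anti σ h
  rw [minUpTo_succ] at h1; omega

lemma valAt_lt {n : ℕ} (σ : Equiv.Perm (Fin n)) {i : ℕ} (h : i < n) :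
    valAt σ i = (σ ⟨i, h⟩ : ℕ) := dif_pos h

lemma minUpTo_attained {n : ℕ} (σ : Equiv.Perm (Fin n)) {r : ℕ} (h0 : 0 < r) (hr : r ≤ n) :
    ∃ i, i < r ∧ minUpTo σ r = valAt σ i := by
  have key : ∀ r, minUpTo σ r = n ∨ ∃ i, i < r ∧ minUpTo σ r = valAt σ i := by
    intro r
    induction r with
    | zero => left; rfl
    | succ r ih =>
      rw [minUpTo_succ]
      rcases le_total (valAt σ r) (minUpTo σ r) with h' | h'
      · right; exact ⟨r, by omega, by omega⟩
      · rcases ih with h'' | ⟨i, hi, h''⟩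
        · left; have := minUpTo_le_n σ r; omega
        · right; exact ⟨i, by omega, by omega⟩
  rcases key r with h' | h'
  · exfalso
    have h1 : minUpTo σ r ≤ valAt σ 0 := minUpTo_le σ h0
    have h2 : valAt σ 0 < n := by
      unfold valAt; rw [dif_pos (by omega)]; exact (σ ⟨0, by omega⟩).2
    omega
  · exact h'

lemma minUpTo_lt_n {n : ℕ} (σ : Equiv.Perm (Fin n)) {r : ℕ} (h0 : 0 < r) (hr : r ≤ n) :
    minUpTo σ r < n := by
  have h1 : minUpTo σ r ≤ valAt σ 0 := minUpTo_le σ h0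
  have h2 : valAt σ 0 < n := by
    unfold valAt; rw [dif_pos (by omega)]; exact (σ ⟨0, by omega⟩).2
  omega

lemma minUpTo_n {n : ℕ} (σ : Equiv.Perm (Fin n)) (hn : 0 < n) : minUpTo σ n = 0 := by
  have h1 : minUpTo σ n ≤ valAt σ (σ⁻¹ ⟨0, hn⟩ : Fin n) := minUpTo_le σ (σ⁻¹ ⟨0, hn⟩).2
  have h2 : valAt σ (σ⁻¹ ⟨0, hn⟩ : Fin n) = 0 := by
    unfold valAt
    rw [dif_pos (σ⁻¹ ⟨0, hn⟩).2]
    simp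
  omega

/-! ### The key arithmetic lemma -/

/-- Key lemma: `m(j+1) + m'(j'+1) ≠ j + j' + 1`. -/
lemma keyK {n : ℕ} (σ : Equiv.Perm (Fin n)) {j j' : ℕ} (hj : j < n) (hj' : j' < n) :
    minUpTo σ (j + 1) + minUpTo σ⁻¹ (j' + 1) ≠ j + j' + 1 := by
  intro hsum
  set a := minUpTo σ (j + 1) with ha
  set b := minUpTo σ⁻¹ (j' + 1) with hb
  have haltn : a < n := minUpTo_lt_n σ (by omega) (by omega)
  have hbltn : b < n := minUpTo_lt_n σ⁻¹ (by omega) (by omega)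
  obtain ⟨p, hp, hpa⟩ := minUpTo_attained σ (r := j+1) (by omega) (by omega)
  have hpn : p < n := by omega
  rw [valAt_lt σ hpn] at hpa
  obtain ⟨q, hq, hqb⟩ := minUpTo_attained σ⁻¹ (r := j'+1) (by omega) (by omega)
  have hqn : q < n := by omega
  rw [valAt_lt σ⁻¹ hqn] at hqb
  rcases Nat.lt_or_ge j' a with hcase | hcase
  · -- a ≥ j'+1 : position b has value q ≤ j' < a, so b > j
    by_cases hbj : b ≤ j
    · -- then a ≤ σ b = q ≤ j' < a, contradiction
      have h1 : a ≤ valAt σ b := minUpTo_le σ (show b < j + 1 by omega)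
      rw [valAt_lt σ hbltn] at h1
      have h2 : (⟨b, hbltn⟩ : Fin n) = σ⁻¹ ⟨q, hqn⟩ := by
        apply Fin.ext; simpa using hqb
      have h3 : (σ ⟨b, hbltn⟩ : ℕ) = q := by
        rw [h2]; simp
      omega
    · omega
  · -- a ≤ j' : position of value a, i.e. p, satisfies b ≤ p ≤ j
    have h1 : b ≤ valAt σ⁻¹ a := minUpTo_le σ⁻¹ (show a < j' + 1 by omega)
    rw [valAt_lt σ⁻¹ haltn] at h1
    have h2 : (⟨a, haltn⟩ : Fin n) = σ ⟨p, hpn⟩ := by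
      apply Fin.ext; simpa using hpa
    have h3 : (σ⁻¹ ⟨a, haltn⟩ : ℕ) = p := by
      rw [h2]; simp
    omega

/-! ### Telescoping sums -/

lemma telescope_forward (m : ℕ → ℕ) (hm : ∀ x y : ℕ, x ≤ y → m y ≤ m x) (k : ℕ) :
    ∑ i ∈ Finset.range k, (m i - m (i + 1)) = m 0 - m k := by
  induction k with
  | zero => simp
  | succ k ih =>
    rw [Finset.sum_range_succ, ih]
    have h1 := hm 0 k (by omega)
    have h2 := hm k (k+1) (by omega)
    omega

lemma telescope_backward (m : ℕ → ℕ) (hm : ∀ x y : ℕ, x ≤ y → m y ≤ m x) (n : ℕ) {k : ℕ}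
    (hk : k ≤ n) :
    ∑ i ∈ Finset.range k, (m (n - 1 - i) - m (n - i)) = m (n - k) - m n := by
  induction k with
  | zero => simp
  | succ k ih =>
    rw [Finset.sum_range_succ, ih (by omega)]
    have h1 := hm (n - k) n (by omega)
    have h2 := hm (n - 1 - k) (n - k) (by omega)
    have h3 : n - 1 - k = n - (k + 1) := by omega
    rw [h3] at h2 ⊢
    omega

/-! ### Representation of block words as position functions -/

/-- word `U D^{b 0} U D^{b 1} ...` as a function of position. -/
lemma flatMap_UD_eq_map (N : ℕ) (b : ℕ → ℕ) :
    (List.range N).flatMap (fun k => true :: List.replicate (b k) false) =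
    (List.range (N + ∑ i ∈ Finset.range N, b i)).map
      (fun p => decide (∃ k, k < N ∧ p = k + ∑ i ∈ Finset.range k, b i)) := by
  induction N with
  | zero => simp
  | succ N ih =>
    have hL : N + 1 + ∑ i ∈ Finset.range (N+1), b i
        = (N + ∑ i ∈ Finset.range N, b i) + (1 + b N) := by
      rw [Finset.sum_range_succ]; omega
    have hsplit := List.range_add (n := N + ∑ i ∈ Finset.range N, b i) (m := 1 + b N)
    rw [List.range_succ, List.flatMap_append, ih, hL, hsplit, List.map_append,
      List.map_map]
    congr 1
    · apply List.map_congr_left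
      intro p hp
      rw [List.mem_range] at hp
      rw [decide_eq_decide]
      constructor
      · rintro ⟨k, hk, hpk⟩; exact ⟨k, by omega, hpk⟩
      · rintro ⟨k, hk, hpk⟩
        refine ⟨k, ?_, hpk⟩
        by_contra h
        have : k = N := by omega
        subst this; omega
    · -- the new block
      simp only [List.flatMap_cons, List.flatMap_nil, List.append_nil]
      set L := N + ∑ i ∈ Finset.range N, b i with hLdef
      have hmono : ∀ k, k ≤ N → ∑ i ∈ Finset.range k, b i ≤ ∑ i ∈ Finset.range N, b i := by
        intro k hk
        exact Finset.sum_le_sum_of_subset (Finset.range_subset_range.mpr hk)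
      have hval : ∀ q, (decide (∃ k, k < N + 1 ∧ L + q = k + ∑ i ∈ Finset.range k, b i))
          = (decide (q = 0)) := by
        intro q
        rw [decide_eq_decide]
        constructor
        · rintro ⟨k, hk, hpk⟩
          rcases Nat.lt_or_ge k N with hcase | hcase
          · exfalso
            have := hmono k (by omega)
            omega
          · have : k = N := by omega
            subst this; omega
        · intro hq0; subst hq0; exact ⟨N, by omega, by omega⟩
      rw [show 1 + b N = b N + 1 by omega, List.range_succ_eq_map, List.map_cons,
        List.map_map]
      congr 1
      · simpa using hval 0
      · symm
        rw [List.eq_replicate_iff]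
        refine ⟨by simp, ?_⟩
        intro x hx
        rw [List.mem_map] at hx
        obtain ⟨q, hq, rfl⟩ := hx
        simpa using hval (q + 1)

/-- word `U^{c 0} D U^{c 1} D ...` as a function of position. -/
lemma flatMap_DU_eq_map (N : ℕ) (c : ℕ → ℕ) :
    (List.range N).flatMap (fun j => List.replicate (c j) true ++ [false]) =
    (List.range (N + ∑ i ∈ Finset.range N, c i)).map
      (fun p => decide (¬ ∃ j, j < N ∧ p = j + ∑ i ∈ Finset.range (j+1), c i)) := by
  induction N with
  | zero => simp
  | succ N ih =>
    have hL : N + 1 + ∑ i ∈ Finset.range (N+1), c i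
        = (N + ∑ i ∈ Finset.range N, c i) + (c N + 1) := by
      rw [Finset.sum_range_succ]; omega
    have hsplit := List.range_add (n := N + ∑ i ∈ Finset.range N, c i) (m := c N + 1)
    rw [List.range_succ, List.flatMap_append, ih, hL, hsplit, List.map_append,
      List.map_map]
    have hmono : ∀ k, k ≤ N → ∑ i ∈ Finset.range k, c i ≤ ∑ i ∈ Finset.range N, c i := by
      intro k hk
      exact Finset.sum_le_sum_of_subset (Finset.range_subset_range.mpr hk)
    congr 1
    · apply List.map_congr_left
      intro p hp
      rw [List.mem_range] at hp
      rw [decide_eq_decide]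
      apply not_congr
      constructor
      · rintro ⟨j, hj, hpj⟩; exact ⟨j, by omega, hpj⟩
      · rintro ⟨j, hj, hpj⟩
        refine ⟨j, ?_, hpj⟩
        by_contra hcon
        have hjN : j = N := by omega
        rw [hjN, Finset.sum_range_succ] at hpj
        have := hmono N (by omega)
        omega
    · simp only [List.flatMap_cons, List.flatMap_nil, List.append_nil]
      set L := N + ∑ i ∈ Finset.range N, c i with hLdef
      have hval : ∀ q, (decide (¬ ∃ j, j < N + 1 ∧ L + q = j + ∑ i ∈ Finset.range (j+1), c i))
          = (decide (¬ q = c N)) := by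
        intro q
        rw [decide_eq_decide]
        apply not_congr
        constructor
        · rintro ⟨j, hj, hpj⟩
          rcases Nat.lt_or_ge j N with hcase | hcase
          · exfalso
            have := hmono (j+1) (by omega)
            omega
          · have : j = N := by omega
            subst this
            rw [Finset.sum_range_succ] at hpj
            omega
        · intro hq0; subst hq0
          exact ⟨N, by omega, by rw [Finset.sum_range_succ]; omega⟩
      rw [List.range_succ, List.map_append]
      congr 1
      · symm
        rw [List.eq_replicate_iff]
        refine ⟨by simp, ?_⟩
        intro x hx
        rw [List.mem_map] at hx
        obtain ⟨q, hq, rfl⟩ := hx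
        rw [List.mem_range] at hq
        simp only [Function.comp_apply, hval q]
        simp
        omega
      · simpa using hval (c N)

/-! ### Reversed range -/

lemma reverse_range (n : ℕ) :
    (List.range n).reverse = (List.range n).map (fun j => n - 1 - j) := by
  induction n with
  | zero => rfl
  | succ n ih =>
    conv_lhs => rw [List.range_succ]
    conv_rhs => rw [List.range_succ_eq_map]
    rw [List.reverse_append, List.map_cons, List.map_map]
    simp only [List.reverse_cons, List.reverse_nil, List.nil_append, List.cons_append,
      List.singleton_append]
    rw [ih]
    refine List.cons_eq_cons.mpr ⟨by omega, ?_⟩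
    apply List.map_congr_left
    intro j hj
    rw [List.mem_range] at hj
    simp only [Function.comp_apply]
    omega

/-! ### psi as a position function -/

lemma psi_eq_map {n : ℕ} (σ : Equiv.Perm (Fin n)) (hn : 0 < n) :
    psi σ = (List.range (2 * n)).map
      (fun p => decide (∃ k, k < n ∧ p = k + minUpTo σ (n - k))) := by
  have hanti : ∀ x y : ℕ, x ≤ y → minUpTo σ y ≤ minUpTo σ x := fun x y h => minUpTo_anti σ h
  have hS : n + ∑ i ∈ Finset.range n, (minUpTo σ (n-1-i) - minUpTo σ (n-i)) = 2 * n := by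
    rw [telescope_backward (minUpTo σ) hanti n (le_refl n), minUpTo_n σ hn,
      Nat.sub_self, minUpTo_zero]
    omega
  unfold psi
  rw [flatMap_UD_eq_map n (fun k => minUpTo σ (n-1-k) - minUpTo σ (n-k)), hS]
  apply List.map_congr_left
  intro p hp
  rw [List.mem_range] at hp
  rw [decide_eq_decide]
  have hsum : ∀ k, k < n →
      ∑ i ∈ Finset.range k, (minUpTo σ (n-1-i) - minUpTo σ (n-i)) = minUpTo σ (n - k) := by
    intro k hk
    rw [telescope_backward (minUpTo σ) hanti n (by omega), minUpTo_n σ hn]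
    omega
  constructor
  · rintro ⟨k, hk, rfl⟩; exact ⟨k, hk, by rw [hsum k hk]⟩
  · rintro ⟨k, hk, rfl⟩; exact ⟨k, hk, by rw [hsum k hk]⟩

lemma reflect_psi_eq_map {n : ℕ} (σ : Equiv.Perm (Fin n)) (hn : 0 < n) :
    (psi σ).reverse.map (fun b => !b) = (List.range (2 * n)).map
      (fun p => decide (¬ ∃ j, j < n ∧ p = j + (n - minUpTo σ (j + 1)))) := by
  have hanti : ∀ x y : ℕ, x ≤ y → minUpTo σ y ≤ minUpTo σ x := fun x y h => minUpTo_anti σ h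
  have step1 : (psi σ).reverse.map (fun b => !b)
      = (List.range n).flatMap
          (fun j => List.replicate (minUpTo σ j - minUpTo σ (j+1)) true ++ [false]) := by
    unfold psi
    rw [List.reverse_flatMap, List.map_flatMap, reverse_range, List.flatMap_map]
    apply List.flatMap_congr
    intro j hj
    rw [List.mem_range] at hj
    have e1 : n - 1 - (n - 1 - j) = j := by omega
    have e2 : n - (n - 1 - j) = j + 1 := by omega
    simp [Function.comp_apply, e1, e2, List.reverse_cons]
  rw [step1, flatMap_DU_eq_map n (fun j => minUpTo σ j - minUpTo σ (j+1))]
  have hS : n + ∑ i ∈ Finset.range n, (minUpTo σ i - minUpTo σ (i+1)) = 2 * n := by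
    rw [telescope_forward (minUpTo σ) hanti n, minUpTo_zero, minUpTo_n σ hn]
    omega
  rw [hS]
  apply List.map_congr_left
  intro p hp
  rw [List.mem_range] at hp
  rw [decide_eq_decide]
  apply not_congr
  have hsum : ∀ j, j < n →
      ∑ i ∈ Finset.range (j+1), (minUpTo σ i - minUpTo σ (i+1)) = n - minUpTo σ (j+1) := by
    intro j hj
    rw [telescope_forward (minUpTo σ) hanti (j+1), minUpTo_zero]
  constructor
  · rintro ⟨j, hj, rfl⟩; exact ⟨j, hj, by rw [hsum j hj]⟩
  · rintro ⟨j, hj, rfl⟩; exact ⟨j, hj, by rw [hsum j hj]⟩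

/-! ### The partition argument -/

lemma partitionAB {n : ℕ} (σ : Equiv.Perm (Fin n)) (hn : 0 < n) (p : ℕ) (hp : p < 2 * n) :
    (∃ k, k < n ∧ p = k + minUpTo σ⁻¹ (n - k)) ↔
    ¬ (∃ j, j < n ∧ p = j + (n - minUpTo σ (j + 1))) := by
  classical
  set A : Finset ℕ := (Finset.range n).image (fun k => k + minUpTo σ⁻¹ (n - k)) with hA
  set B : Finset ℕ := (Finset.range n).image (fun j => j + (n - minUpTo σ (j + 1))) with hB
  have hmemA : ∀ x, x ∈ A ↔ ∃ k, k < n ∧ x = k + minUpTo σ⁻¹ (n - k) := by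
    intro x
    simp only [hA, Finset.mem_image, Finset.mem_range]
    constructor
    · rintro ⟨k, hk, h⟩; exact ⟨k, hk, h.symm⟩
    · rintro ⟨k, hk, h⟩; exact ⟨k, hk, h.symm⟩
  have hmemB : ∀ x, x ∈ B ↔ ∃ j, j < n ∧ x = j + (n - minUpTo σ (j + 1)) := by
    intro x
    simp only [hB, Finset.mem_image, Finset.mem_range]
    constructor
    · rintro ⟨j, hj, h⟩; exact ⟨j, hj, h.symm⟩
    · rintro ⟨j, hj, h⟩; exact ⟨j, hj, h.symm⟩
  have hdisj : Disjoint A B := by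
    rw [Finset.disjoint_left]
    intro x hxA hxB
    rw [hmemA] at hxA
    rw [hmemB] at hxB
    obtain ⟨k, hk, rfl⟩ := hxA
    obtain ⟨j, hj, heq⟩ := hxB
    have hj'lt : n - 1 - k < n := by omega
    have hK := keyK σ hj hj'lt
    have hnk : n - k = (n - 1 - k) + 1 := by omega
    have hle : minUpTo σ (j+1) ≤ n := minUpTo_le_n σ _
    rw [hnk] at heq
    omega
  have hmonoA : ∀ a b, a < b → b < n →
      a + minUpTo σ⁻¹ (n - a) < b + minUpTo σ⁻¹ (n - b) := by
    intro a b hab hbn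
    have := minUpTo_anti σ⁻¹ (show n - b ≤ n - a by omega)
    omega
  have hmonoB : ∀ a b, a < b → b < n →
      a + (n - minUpTo σ (a + 1)) < b + (n - minUpTo σ (b + 1)) := by
    intro a b hab hbn
    have := minUpTo_anti σ (show a + 1 ≤ b + 1 by omega)
    omega
  have hcardA : A.card = n := by
    rw [hA, Finset.card_image_of_injOn, Finset.card_range]
    intro a ha b hb hab
    simp only [Finset.coe_range, Set.mem_Iio] at ha hb
    have hab' : a + minUpTo σ⁻¹ (n - a) = b + minUpTo σ⁻¹ (n - b) := hab
    rcases lt_trichotomy a b with hc | hc | hc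
    · have := hmonoA a b hc hb; omega
    · exact hc
    · have := hmonoA b a hc ha; omega
  have hcardB : B.card = n := by
    rw [hB, Finset.card_image_of_injOn, Finset.card_range]
    intro a ha b hb hab
    simp only [Finset.coe_range, Set.mem_Iio] at ha hb
    have hab' : a + (n - minUpTo σ (a + 1)) = b + (n - minUpTo σ (b + 1)) := hab
    rcases lt_trichotomy a b with hc | hc | hc
    · have := hmonoB a b hc hb; omega
    · exact hc
    · have := hmonoB b a hc ha; omega
  have hsub : A ∪ B ⊆ Finset.range (2 * n) := by
    intro x hx
    rw [Finset.mem_union] at hx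
    rw [Finset.mem_range]
    rcases hx with hx | hx
    · rw [hmemA] at hx
      obtain ⟨k, hk, rfl⟩ := hx
      have := minUpTo_le_n σ⁻¹ (n - k)
      omega
    · rw [hmemB] at hx
      obtain ⟨j, hj, rfl⟩ := hx
      omega
  have hunion : A ∪ B = Finset.range (2 * n) := by
    apply Finset.eq_of_subset_of_card_le hsub
    rw [Finset.card_union_of_disjoint hdisj, hcardA, hcardB, Finset.card_range]
    omega
  constructor
  · intro hpA hpB
    rw [← hmemA] at hpA
    rw [← hmemB] at hpB
    exact (Finset.disjoint_left.mp hdisj) hpA hpB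
  · intro hpB
    rw [← hmemA]
    have hpu : p ∈ A ∪ B := by
      rw [hunion, Finset.mem_range]; exact hp
    rw [Finset.mem_union] at hpu
    rcases hpu with h | h
    · exact h
    · exact absurd ((hmemB p).mp h) hpB

/-! ### Recovering a strictly monotone enumeration from its image -/

lemma strictMono_image_eq {N : ℕ} (f g : ℕ → ℕ)
    (hf : ∀ a b, a < b → b < N → f a < f b) (hg : ∀ a b, a < b → b < N → g a < g b)
    (h : (Finset.range N).image f = (Finset.range N).image g) :
    ∀ k, k < N → f k = g k := by
  intro k
  induction k using Nat.strong_induction_on with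
  | _ k ih =>
    intro hk
    have hfk : f k ∈ (Finset.range N).image g := by
      rw [← h]; exact Finset.mem_image_of_mem f (Finset.mem_range.mpr hk)
    rw [Finset.mem_image] at hfk
    obtain ⟨t, ht, hgt⟩ := hfk
    rw [Finset.mem_range] at ht
    rcases lt_trichotomy t k with hc | hc | hc
    · exfalso
      have h1 : f t = g t := ih t hc (by omega)
      have h2 : f t < f k := hf t k hc hk
      omega
    · subst hc; omega
    · exfalso
      have hgk : g k ∈ (Finset.range N).image f := by
        rw [h]; exact Finset.mem_image_of_mem g (Finset.mem_range.mpr hk)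
      rw [Finset.mem_image] at hgk
      obtain ⟨s, hs, hfs⟩ := hgk
      rw [Finset.mem_range] at hs
      have h3 : g k < g t := hg k t hc ht
      rcases lt_trichotomy s k with hc2 | hc2 | hc2
      · have h4 : f s = g s := ih s hc2 (by omega)
        have h5 : g s < g k := hg s k hc2 hk
        omega
      · subst hc2; omega
      · have h6 : f k < f s := hf k s hc2 hs
        omega

/-! ### 132-avoidance lemmas -/

lemma avoids132_inv {n : ℕ} {σ : Equiv.Perm (Fin n)} (hσ : Avoids132 σ) : Avoids132 σ⁻¹ := by
  rintro ⟨i, j, k, hij, hjk, h1, h2⟩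
  exact hσ ⟨σ⁻¹ i, σ⁻¹ k, σ⁻¹ j, h1, h2, by simpa using hij, by simpa using hjk⟩

lemma le_of_unused {n : ℕ} (σ τ : Equiv.Perm (Fin n)) (hσ : Avoids132 σ)
    (j : Fin n) (ihe : ∀ i : Fin n, i < j → σ i = τ i)
    (i0 : Fin n) (hi0 : i0 < j) (hlt : σ i0 < τ j) : σ j ≤ τ j := by
  set k := σ⁻¹ (τ j) with hkdef
  have hσk : σ k = τ j := (Equiv.eq_symm_apply σ).mp rfl
  rcases lt_trichotomy k j with hc | hc | hc
  · exfalso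
    have he := ihe k hc
    rw [he] at hσk
    have : k = j := τ.injective hσk
    rw [this] at hc
    exact lt_irrefl _ hc
  · rw [hc] at hσk
    exact le_of_eq hσk
  · by_contra hcon
    push_neg at hcon
    exact hσ ⟨i0, j, k, hi0, hc, by rw [hσk]; exact hlt, by rw [hσk]; exact hcon⟩

lemma minUpTo_determines {n : ℕ} (σ τ : Equiv.Perm (Fin n))
    (hσ : Avoids132 σ) (hτ : Avoids132 τ)
    (hm : ∀ r, minUpTo σ r = minUpTo τ r) : σ = τ := by
  have key : ∀ j : ℕ, ∀ hj : j < n, σ ⟨j, hj⟩ = τ ⟨j, hj⟩ := by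
    intro j
    induction j using Nat.strong_induction_on with
    | _ j ih =>
      intro hj
      have hsσ : minUpTo σ (j+1) = min ((σ ⟨j, hj⟩ : ℕ)) (minUpTo σ j) := by
        rw [minUpTo_succ, valAt_lt σ hj]
      have hsτ : minUpTo τ (j+1) = min ((τ ⟨j, hj⟩ : ℕ)) (minUpTo τ j) := by
        rw [minUpTo_succ, valAt_lt τ hj]
      have hm1 := hm (j+1)
      have hm0 := hm j
      rcases Nat.lt_or_ge (minUpTo σ (j+1)) (minUpTo σ j) with hcase | hcase
      · apply Fin.ext
        omega
      · -- minUpTo σ (j+1) = minUpTo σ j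
        have hanti : minUpTo σ (j+1) ≤ minUpTo σ j := minUpTo_anti σ (by omega)
        have hMeq : minUpTo σ (j+1) = minUpTo σ j := by omega
        have hj0 : 0 < j := by
          by_contra h0
          have hj00 : j = 0 := by omega
          subst hj00
          have h1 : minUpTo σ 0 = n := minUpTo_zero σ
          have h2 : (σ ⟨0, hj⟩ : ℕ) < n := (σ ⟨0, hj⟩).2
          omega
        obtain ⟨i0, hi0lt, hi0⟩ := minUpTo_attained σ (r := j) hj0 (by omega)
        have hi0n : i0 < n := by omega
        rw [valAt_lt σ hi0n] at hi0
        obtain ⟨i1, hi1lt, hi1⟩ := minUpTo_attained τ (r := j) hj0 (by omega)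
        have hi1n : i1 < n := by omega
        rw [valAt_lt τ hi1n] at hi1
        -- σ j > minUpTo σ j, τ j > minUpTo τ j
        have hgtσ : minUpTo σ j < (σ ⟨j, hj⟩ : ℕ) := by
          have hge : minUpTo σ j ≤ (σ ⟨j, hj⟩ : ℕ) := by omega
          rcases Nat.lt_or_ge (minUpTo σ j) (σ ⟨j, hj⟩ : ℕ) with h' | h'
          · exact h'
          · exfalso
            have heq2 : (σ ⟨j, hj⟩ : ℕ) = (σ ⟨i0, hi0n⟩ : ℕ) := by omega
            have : (⟨j, hj⟩ : Fin n) = ⟨i0, hi0n⟩ := σ.injective (Fin.ext heq2)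
            have := Fin.mk.injEq j hj i0 hi0n ▸ this
            omega
        have hgtτ : minUpTo τ j < (τ ⟨j, hj⟩ : ℕ) := by
          have hge : minUpTo τ j ≤ (τ ⟨j, hj⟩ : ℕ) := by omega
          rcases Nat.lt_or_ge (minUpTo τ j) (τ ⟨j, hj⟩ : ℕ) with h' | h'
          · exact h'
          · exfalso
            have heq2 : (τ ⟨j, hj⟩ : ℕ) = (τ ⟨i1, hi1n⟩ : ℕ) := by omega
            have : (⟨j, hj⟩ : Fin n) = ⟨i1, hi1n⟩ := τ.injective (Fin.ext heq2)
            have := Fin.mk.injEq j hj i1 hi1n ▸ this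
            omega
        have ihe : ∀ i : Fin n, i < ⟨j, hj⟩ → σ i = τ i := by
          intro i hi
          have hi' : (i : ℕ) < j := hi
          have := ih i.1 hi' i.2
          simpa using this
        have ihe' : ∀ i : Fin n, i < ⟨j, hj⟩ → τ i = σ i := fun i hi => (ihe i hi).symm
        have h1 : σ ⟨j, hj⟩ ≤ τ ⟨j, hj⟩ := by
          apply le_of_unused σ τ hσ ⟨j, hj⟩ ihe ⟨i0, hi0n⟩
          · exact hi0lt
          · show (σ ⟨i0, hi0n⟩ : ℕ) < (τ ⟨j, hj⟩ : ℕ)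
            omega
        have h2 : τ ⟨j, hj⟩ ≤ σ ⟨j, hj⟩ := by
          apply le_of_unused τ σ hτ ⟨j, hj⟩ ihe' ⟨i1, hi1n⟩
          · exact hi1lt
          · show (τ ⟨i1, hi1n⟩ : ℕ) < (σ ⟨j, hj⟩ : ℕ)
            omega
        exact le_antisymm h1 h2
  apply Equiv.ext
  intro i
  have := key i.1 i.2
  simpa using this

/-! ### Main theorem -/

/-- `Ψ σ⁻¹` is the reflection of `Ψ σ` across the vertical line `x = n` (reverse the
word and swap up-steps with down-steps); consequently, `σ` is an involution iff
`Ψ σ` is symmetric under this reflection. -/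
theorem stmt19 (n : ℕ) (σ : Equiv.Perm (Fin n)) (h : Avoids132 σ) :
    psi σ⁻¹ = (psi σ).reverse.map (fun b => !b) ∧
      (σ⁻¹ = σ ↔ psi σ = (psi σ).reverse.map (fun b => !b)) := by
  rcases Nat.eq_zero_or_pos n with hn | hn
  · subst hn
    refine ⟨by simp [psi], ?_, ?_⟩
    · intro _; simp [psi]
    · intro _
      apply Equiv.ext
      intro i
      exact absurd i.2 (Nat.not_lt_zero _)
  · have part1 : psi σ⁻¹ = (psi σ).reverse.map (fun b => !b) := by
      rw [psi_eq_map σ⁻¹ hn, reflect_psi_eq_map σ hn]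
      apply List.map_congr_left
      intro p hp
      rw [List.mem_range] at hp
      rw [decide_eq_decide]
      exact partitionAB σ hn p hp
    refine ⟨part1, ?_, ?_⟩
    · intro h'
      rw [← part1, h']
    · intro hsym
      have hψ : psi σ = psi σ⁻¹ := by rw [hsym, part1]
      rw [psi_eq_map σ hn, psi_eq_map σ⁻¹ hn] at hψ
      have hpt := List.map_inj_left.mp hψ
      have hmono_σ : ∀ a b, a < b → b < n →
          a + minUpTo σ (n - a) < b + minUpTo σ (n - b) := by
        intro a b hab hbn
        have := minUpTo_anti σ (show n - b ≤ n - a by omega)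
        omega
      have hmono_inv : ∀ a b, a < b → b < n →
          a + minUpTo σ⁻¹ (n - a) < b + minUpTo σ⁻¹ (n - b) := by
        intro a b hab hbn
        have := minUpTo_anti σ⁻¹ (show n - b ≤ n - a by omega)
        omega
      have himg : (Finset.range n).image (fun k => k + minUpTo σ (n - k))
          = (Finset.range n).image (fun k => k + minUpTo σ⁻¹ (n - k)) := by
        ext x
        simp only [Finset.mem_image, Finset.mem_range]
        constructor
        · rintro ⟨k, hk, rfl⟩
          have hx : k + minUpTo σ (n - k) < 2 * n := by
            have := minUpTo_le_n σ (n - k); omega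
          have hd := hpt _ (List.mem_range.mpr hx)
          rw [decide_eq_decide] at hd
          obtain ⟨k', hk', he⟩ := hd.mp ⟨k, hk, rfl⟩
          exact ⟨k', hk', he.symm⟩
        · rintro ⟨k, hk, rfl⟩
          have hx : k + minUpTo σ⁻¹ (n - k) < 2 * n := by
            have := minUpTo_le_n σ⁻¹ (n - k); omega
          have hd := hpt _ (List.mem_range.mpr hx)
          rw [decide_eq_decide] at hd
          obtain ⟨k', hk', he⟩ := hd.mpr ⟨k, hk, rfl⟩
          exact ⟨k', hk', he.symm⟩
      have heq := strictMono_image_eq _ _ hmono_σ hmono_inv himg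
      have hr : ∀ r, minUpTo σ⁻¹ r = minUpTo σ r := by
        intro r
        rcases Nat.eq_zero_or_pos r with hr0 | hr0
        · subst hr0; rw [minUpTo_zero, minUpTo_zero]
        · rcases le_or_gt r n with hrn | hrn
          · have hk : n - r < n := by omega
            have := heq (n - r) hk
            have hnr : n - (n - r) = r := by omega
            rw [hnr] at this
            omega
          · have h1 : minUpTo σ r ≤ minUpTo σ n := minUpTo_anti σ (by omega)
            have h2 : minUpTo σ⁻¹ r ≤ minUpTo σ⁻¹ n := minUpTo_anti σ⁻¹ (by omega)
            rw [minUpTo_n σ hn] at h1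
            rw [minUpTo_n σ⁻¹ hn] at h2
            omega
      exact minUpTo_determines σ⁻¹ σ (avoids132_inv h) h hr
end
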